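/- If two assignments a, b to sheaves S, R with the same stalks on the same finite topological space satisfy |c_S(a,U) − c_R(b,U)| < ε for every open U, then the coarsening filtrations t ↦ M_{S,a}(t) and t ↦ M_{R,b}(t) are ε-interleaved; concretely, for every t, M_{S,a}(t−ε) refines M_{R,b}(t) and M_{R,b}(t−ε) refines M_{S,a}(t). -/

import Mathlib

open TopologicalSpace ENNReal

universe u v

/-- A sheaf of pseudometric spaces on a topological space, presented by its
stalks `F U` (pseudometric spaces) and continuous restriction maps. -/
structure ResSystem (X : Type u) [TopologicalSpace X] (F : Opens X → Type v)
    [∀ U, PseudoMetricSpace (F U)] where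
  res : ∀ {U V : Opens X}, U ≤ V → F V → F U
  res_id : ∀ (U : Opens X) (x : F U), res le_rfl x = x
  res_comp : ∀ {U V W : Opens X} (hUV : U ≤ V) (hVW : V ≤ W) (x : F W),
    res (hUV.trans hVW) x = res hUV (res hVW x)
  res_cont : ∀ {U V : Opens X} (h : U ≤ V), Continuous (res h)

variable {X : Type u} [TopologicalSpace X] {F : Opens X → Type v} [∀ U, PseudoMetricSpace (F U)]

/-- Consistency radius of an assignment. -/
noncomputable def ResSystem.crad (S : ResSystem X F) (a : ∀ U, F U) : ℝ≥0∞ :=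
  ⨆ (U : Opens X) (V : Opens X) (h : U ≤ V), edist (S.res h (a V)) (a U)

/-- Local consistency radius of an assignment on an open set `W`. -/
noncomputable def ResSystem.lcrad (S : ResSystem X F) (a : ∀ U, F U) (W : Opens X) : ℝ≥0∞ :=
  ⨆ (U : Opens X) (V : Opens X) (_ : V ≤ W) (h : U ≤ V), edist (S.res h (a V)) (a U)

/-- An assignment is a global section when it is compatible with all restrictions. -/
def ResSystem.IsGlobalSection (S : ResSystem X F) (s : ∀ U, F U) : Prop :=
  ∀ {U V : Opens X} (h : U ≤ V), S.res h (s V) = s U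

/-- A collection of open sets refines another if every member of the first is
contained in some member of the second. -/
def Refines (A B : Set (Opens X)) : Prop := ∀ U ∈ A, ∃ V ∈ B, U ≤ V

/-- The maximal `ε`-consistent collection: the open sets with local consistency radius
less than `ε` that are maximal under inclusion among such. -/
def maxColl (S : ResSystem X F) (a : ∀ U, F U) (ε : ℝ≥0∞) : Set (Opens X) :=
  {U | S.lcrad a U < ε ∧ ∀ V : Opens X, S.lcrad a V < ε → U ≤ V → U = V}


private lemma refines_aux [Finite (Opens X)]
    (S R : ResSystem X F) (a b : ∀ U, F U) (ε t : ℝ≥0∞)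
    (h : ∀ U : Opens X, R.lcrad b U < S.lcrad a U + ε) :
    Refines (maxColl S a (t - ε)) (maxColl R b t) := by
  intro U hU
  have h2 : R.lcrad b U < t := by
    have := (lt_tsub_iff_right.mp hU.1)
    exact lt_trans (h U) this
  obtain ⟨V, hVs, hmax⟩ := Set.Finite.exists_maximalFor id
    {V : Opens X | R.lcrad b V < t ∧ U ≤ V} (Set.toFinite _) ⟨U, h2, le_rfl⟩
  exact ⟨V, ⟨hVs.1, fun W hW hVW => le_antisymm hVW (hmax ⟨hW, hVs.2.trans hVW⟩ hVW)⟩, hVs.2⟩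

/-- If the local consistency radii of `(S,a)` and `(R,b)` differ by less than `ε` on every
open set, then their consistency filtrations are `ε`-interleaved: for every `t`,
`M_{S,a}(t−ε)` refines `M_{R,b}(t)` and `M_{R,b}(t−ε)` refines `M_{S,a}(t)`. -/
theorem consistency_filtration_interleaved [Finite (Opens X)]
    (S R : ResSystem X F) (a b : ∀ U, F U) (ε : ℝ≥0∞)
    (hclose : ∀ U : Opens X,
      S.lcrad a U < R.lcrad b U + ε ∧ R.lcrad b U < S.lcrad a U + ε) :
    ∀ t : ℝ≥0∞,
      Refines (maxColl S a (t - ε)) (maxColl R b t) ∧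
      Refines (maxColl R b (t - ε)) (maxColl S a t) := by
  intro t
  exact ⟨refines_aux S R a b ε t (fun U => (hclose U).2),
    refines_aux R S b a ε t (fun U => (hclose U).1)⟩
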